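/- Let K be a local field of characteristic p with uniformiser π, let m > 0 be prime to p, let a ∈ K with v_K(a) = −m, and let α be a root of T^p − T − a. If x, y ∈ Z satisfy −mx + py = 1, then α^x π^y is a uniformiser of L = K(α), and o_L = o_K[α^x π^y]. -/

import Mathlib

open IntermediateField

section Aux
variable {L : Type*} [Field L] {w : L → ℤ}
  (hmul : ∀ u v : L, u ≠ 0 → v ≠ 0 → w (u * v) = w u + w v)
  (hadd : ∀ u v : L, u ≠ 0 → v ≠ 0 → u + v ≠ 0 → min (w u) (w v) ≤ w (u + v))

include hmul

lemma aux_w_one : w 1 = 0 := by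
  have h := hmul 1 1 one_ne_zero one_ne_zero
  simp only [mul_one] at h
  omega

lemma aux_w_neg (u : L) (hu : u ≠ 0) : w (-u) = w u := by
  have h1 : w ((-1 : L) * (-1)) = w (-1 : L) + w (-1 : L) :=
    hmul _ _ (by simp) (by simp)
  rw [neg_mul_neg, one_mul, aux_w_one hmul] at h1
  have h2 : w ((-1 : L) * u) = w (-1 : L) + w u := hmul _ _ (by simp) hu
  rw [neg_one_mul] at h2
  omega

lemma aux_w_inv (u : L) (hu : u ≠ 0) : w u⁻¹ = -w u := by
  have h := hmul u u⁻¹ hu (inv_ne_zero hu)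
  rw [mul_inv_cancel₀ hu, aux_w_one hmul] at h
  omega

lemma aux_w_pow (u : L) (hu : u ≠ 0) (n : ℕ) : w (u ^ n) = n * w u := by
  induction n with
  | zero => simp [aux_w_one hmul]
  | succ n ih =>
    rw [pow_succ, hmul _ _ (pow_ne_zero _ hu) hu, ih]
    push_cast; ring

lemma aux_w_zpow (u : L) (hu : u ≠ 0) (n : ℤ) : w (u ^ n) = n * w u := by
  cases n with
  | ofNat n => simpa using aux_w_pow hmul u hu n
  | negSucc n =>
    rw [zpow_negSucc, aux_w_inv hmul _ (pow_ne_zero _ hu), aux_w_pow hmul u hu,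
      Int.negSucc_eq]
    push_cast; ring

include hadd

lemma aux_w_add_lt (u v : L) (hu : u ≠ 0) (hv : v ≠ 0) (h : w u < w v) :
    u + v ≠ 0 ∧ w (u + v) = w u := by
  have hne : u + v ≠ 0 := by
    intro h0
    have hv' : v = -u := by linear_combination h0
    rw [hv', aux_w_neg hmul u hu] at h
    exact lt_irrefl _ h
  refine ⟨hne, le_antisymm ?_ ?_⟩
  · have h2 := hadd (u + v) (-v) hne (neg_ne_zero.2 hv) (by simpa using hu)
    rw [add_neg_cancel_right, aux_w_neg hmul v hv] at h2
    rcases min_le_iff.mp h2 with h' | h'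
    · exact h'
    · omega
  · have h3 := hadd u v hu hv hne
    rwa [min_eq_left h.le] at h3

lemma aux_w_sum {ι : Type*} (s : Finset ι) (f : ι → L)
    (h0 : ∀ i ∈ s, f i ≠ 0)
    (hd : ∀ i ∈ s, ∀ j ∈ s, i ≠ j → w (f i) ≠ w (f j)) (hs : s.Nonempty) :
    (∑ i ∈ s, f i) ≠ 0 ∧
      ∃ i ∈ s, w (∑ i ∈ s, f i) = w (f i) ∧ ∀ j ∈ s, w (f i) ≤ w (f j) := by
  classical
  induction s using Finset.cons_induction with
  | empty => simp at hs
  | cons a s ha ih =>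
    rcases s.eq_empty_or_nonempty with rfl | hs'
    · simp only [Finset.sum_cons, Finset.sum_empty, add_zero]
      exact ⟨h0 a (by simp), a, by simp, rfl, by simp⟩
    · have h0' : ∀ i ∈ s, f i ≠ 0 := fun i hi => h0 i (Finset.mem_cons_of_mem hi)
      have hd' : ∀ i ∈ s, ∀ j ∈ s, i ≠ j → w (f i) ≠ w (f j) := fun i hi j hj =>
        hd i (Finset.mem_cons_of_mem hi) j (Finset.mem_cons_of_mem hj)
      obtain ⟨hS0, i0, hi0, hwS, hmin⟩ := ih h0' hd' hs'
      have hfa : f a ≠ 0 := h0 a (Finset.mem_cons_self a s)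
      have hane : w (f a) ≠ w (f i0) :=
        hd a (Finset.mem_cons_self a s) i0 (Finset.mem_cons_of_mem hi0)
          (fun h => ha (h ▸ hi0))
      rcases lt_or_gt_of_ne hane with hlt | hgt
      · have hlt' : w (f a) < w (∑ i ∈ s, f i) := by omega
        obtain ⟨hne, heq⟩ := aux_w_add_lt hmul hadd (f a) _ hfa hS0 hlt'
        rw [Finset.sum_cons]
        refine ⟨hne, a, Finset.mem_cons_self a s, heq, ?_⟩
        intro j hj
        rcases Finset.mem_cons.mp hj with rfl | hj'
        · exact le_refl _
        · have := hmin j hj'; omega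
      · have hlt' : w (∑ i ∈ s, f i) < w (f a) := by omega
        obtain ⟨hne, heq⟩ := aux_w_add_lt hmul hadd _ (f a) hS0 hfa hlt'
        rw [add_comm] at hne heq
        rw [Finset.sum_cons]
        refine ⟨hne, i0, Finset.mem_cons_of_mem hi0, by omega, ?_⟩
        intro j hj
        rcases Finset.mem_cons.mp hj with rfl | hj'
        · omega
        · exact hmin j hj'

end Aux

-- lemma: nonzero power series has nonneg order as Laurent series
lemma aux_order_nonneg {k : Type*} [Field k] (f : PowerSeries k) (hf : f ≠ 0) :
    0 ≤ (HahnSeries.ofPowerSeries ℤ k f).order := by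
  by_contra h
  push_neg at h
  have hne : (HahnSeries.ofPowerSeries ℤ k f) ≠ 0 := fun h0 =>
    hf (HahnSeries.ofPowerSeries_injective (by rw [h0, map_zero]))
  have h1 := HahnSeries.coeff_order_eq_zero.not.2 hne
  rw [show (HahnSeries.ofPowerSeries ℤ k f) = ((f : PowerSeries k) : LaurentSeries k) from rfl,
    PowerSeries.coeff_coe, if_pos h] at h1
  exact h1 rfl

-- lemma: Laurent series with nonneg order is a power series
lemma aux_mem_range {k : Type*} [Field k] (f : LaurentSeries k) (hf : 0 ≤ f.order) :
    ∃ g : PowerSeries k, HahnSeries.ofPowerSeries ℤ k g = f := by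
  refine ⟨PowerSeries.X ^ f.order.toNat * f.powerSeriesPart, ?_⟩
  exact LaurentSeries.X_order_mul_powerSeriesPart (by simpa using Int.toNat_of_nonneg hf)

set_option maxHeartbeats 4000000 in
set_option synthInstance.maxHeartbeats 400000 in
theorem stmt14 (p : ℕ) [Fact p.Prime] (k : Type*) [Field k] [Fintype k] [CharP k p]
    (m : ℕ) (hm : 0 < m) (hmp : ¬ p ∣ m)
    (π : LaurentSeries k) (hπ0 : π ≠ 0) (hπ : π.order = 1)
    (a : LaurentSeries k) (ha0 : a ≠ 0) (ha : a.order = -(m : ℤ))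
    (α : AlgebraicClosure (LaurentSeries k))
    (hα : α ^ p - α = algebraMap (LaurentSeries k) (AlgebraicClosure (LaurentSeries k)) a)
    (w : (LaurentSeries k)⟮α⟯ → ℤ)
    (hw_mul : ∀ u v : (LaurentSeries k)⟮α⟯, u ≠ 0 → v ≠ 0 → w (u * v) = w u + w v)
    (hw_add : ∀ u v : (LaurentSeries k)⟮α⟯, u ≠ 0 → v ≠ 0 → u + v ≠ 0 →
      min (w u) (w v) ≤ w (u + v))
    (hw_ext : ∀ z : LaurentSeries k, z ≠ 0 →
      w (algebraMap (LaurentSeries k) (LaurentSeries k)⟮α⟯ z) = p * z.order)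
    (x y : ℤ) (hxy : -(m : ℤ) * x + p * y = 1) :
    letI : Algebra (PowerSeries k) (LaurentSeries k)⟮α⟯ :=
      ((algebraMap (LaurentSeries k) (LaurentSeries k)⟮α⟯).comp
        (algebraMap (PowerSeries k) (LaurentSeries k))).toAlgebra
    ∀ t : (LaurentSeries k)⟮α⟯,
      t = (AdjoinSimple.gen (LaurentSeries k) α) ^ x *
          (algebraMap (LaurentSeries k) (LaurentSeries k)⟮α⟯ π) ^ y →
      w t = 1 ∧
        {z : (LaurentSeries k)⟮α⟯ | z = 0 ∨ 0 ≤ w z} =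
          (Algebra.adjoin (PowerSeries k) {t} :
            Subalgebra (PowerSeries k) (LaurentSeries k)⟮α⟯) := by
  letI : Algebra (PowerSeries k) (LaurentSeries k)⟮α⟯ :=
    ((algebraMap (LaurentSeries k) (LaurentSeries k)⟮α⟯).comp
      (algebraMap (PowerSeries k) (LaurentSeries k))).toAlgebra
  intro t ht
  have hp2 : 2 ≤ p := (Fact.out : p.Prime).two_le
  have hinj : Function.Injective
      (algebraMap (LaurentSeries k) (LaurentSeries k)⟮α⟯) :=
    (algebraMap (LaurentSeries k) (LaurentSeries k)⟮α⟯).injective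
  have hane : algebraMap (LaurentSeries k) (LaurentSeries k)⟮α⟯ a ≠ 0 := fun h =>
    ha0 (hinj (by rw [h, map_zero]))
  have hπne : algebraMap (LaurentSeries k) (LaurentSeries k)⟮α⟯ π ≠ 0 := fun h =>
    hπ0 (hinj (by rw [h, map_zero]))
  -- the Artin-Schreier equation inside L
  have heq : (AdjoinSimple.gen (LaurentSeries k) α) ^ p - AdjoinSimple.gen (LaurentSeries k) α
      = algebraMap (LaurentSeries k) (LaurentSeries k)⟮α⟯ a := by
    apply (algebraMap ((LaurentSeries k)⟮α⟯) (AlgebraicClosure (LaurentSeries k))).injective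
    rw [RingHom.map_sub, RingHom.map_pow, AdjoinSimple.algebraMap_gen, hα,
      ← IsScalarTower.algebraMap_apply]
  have he0 : AdjoinSimple.gen (LaurentSeries k) α ≠ 0 := by
    intro h
    rw [h] at heq
    simp only [ne_eq, zero_pow (by omega : p ≠ 0), sub_zero] at heq
    exact hane heq.symm
  have hwa : w (algebraMap (LaurentSeries k) (LaurentSeries k)⟮α⟯ a)
      = (p : ℤ) * (-(m : ℤ)) := by rw [hw_ext a ha0, ha]
  -- w e = -m
  have hwe : w (AdjoinSimple.gen (LaurentSeries k) α) = -(m : ℤ) := by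
    have hpm : (0 : ℤ) < (p : ℤ) * (m : ℤ) := by positivity
    have hneg : w (AdjoinSimple.gen (LaurentSeries k) α) < 0 := by
      by_contra hge
      push_neg at hge
      have h1 := hw_add ((AdjoinSimple.gen (LaurentSeries k) α) ^ p)
        (-(AdjoinSimple.gen (LaurentSeries k) α)) (pow_ne_zero p he0) (neg_ne_zero.2 he0)
        (by rw [← sub_eq_add_neg, heq]; exact hane)
      rw [← sub_eq_add_neg, heq, hwa, aux_w_neg hw_mul _ he0,
        aux_w_pow hw_mul _ he0 p] at h1
      rcases min_le_iff.mp h1 with h' | h'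
      · nlinarith
      · nlinarith
    have hlt : w ((AdjoinSimple.gen (LaurentSeries k) α) ^ p)
        < w (-(AdjoinSimple.gen (LaurentSeries k) α)) := by
      rw [aux_w_neg hw_mul _ he0, aux_w_pow hw_mul _ he0 p]
      nlinarith
    have h2 := (aux_w_add_lt hw_mul hw_add _ _ (pow_ne_zero p he0)
      (neg_ne_zero.2 he0) hlt).2
    rw [← sub_eq_add_neg, heq, hwa, aux_w_pow hw_mul _ he0 p] at h2
    have hp0 : (p : ℤ) ≠ 0 := by positivity
    exact (mul_left_cancel₀ hp0 h2).symm
  have hwπ : w (algebraMap (LaurentSeries k) (LaurentSeries k)⟮α⟯ π) = (p : ℤ) := by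
    rw [hw_ext π hπ0, hπ, mul_one]
  have hex : (AdjoinSimple.gen (LaurentSeries k) α) ^ x ≠ 0 := zpow_ne_zero x he0
  have hπy : (algebraMap (LaurentSeries k) (LaurentSeries k)⟮α⟯ π) ^ y ≠ 0 :=
    zpow_ne_zero y hπne
  have ht0 : t ≠ 0 := by rw [ht]; exact mul_ne_zero hex hπy
  have hwt : w t = 1 := by
    rw [ht, hw_mul _ _ hex hπy, aux_w_zpow hw_mul _ he0 x,
      aux_w_zpow hw_mul _ hπne y, hwe, hwπ]
    linarith [hxy]
  refine ⟨hwt, ?_⟩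
  have halgPS : ∀ g : PowerSeries k,
      algebraMap (PowerSeries k) ((LaurentSeries k)⟮α⟯) g
        = algebraMap (LaurentSeries k) ((LaurentSeries k)⟮α⟯)
            (HahnSeries.ofPowerSeries ℤ k g) := fun g => rfl
  have hwtpow : ∀ (c : LaurentSeries k), c ≠ 0 → ∀ i : ℕ,
      w (c • t ^ i) = p * c.order + i := by
    intro c hc i
    rw [Algebra.smul_def, hw_mul _ _ (fun h => hc (hinj (by rw [h, map_zero])))
      (pow_ne_zero _ ht0), hw_ext c hc, aux_w_pow hw_mul t ht0 i, hwt, mul_one]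
  have hdist : ∀ (i j : Fin p), i ≠ j → ∀ (ci cj : LaurentSeries k), ci ≠ 0 → cj ≠ 0 →
      w (ci • t ^ (i : ℕ)) ≠ w (cj • t ^ (j : ℕ)) := by
    intro i j hij ci cj hci hcj hequ
    rw [hwtpow ci hci, hwtpow cj hcj] at hequ
    have hibound : ((i : ℕ) : ℤ) < p := by exact_mod_cast i.2
    have hjbound : ((j : ℕ) : ℤ) < p := by exact_mod_cast j.2
    have hi0 : (0 : ℤ) ≤ ((i : ℕ) : ℤ) := Int.natCast_nonneg _
    have hj0 : (0 : ℤ) ≤ ((j : ℕ) : ℤ) := Int.natCast_nonneg _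
    have hp0 : (0 : ℤ) < p := by positivity
    have h1 : ((i : ℕ) : ℤ) - ((j : ℕ) : ℤ) = p * (cj.order - ci.order) := by ring_nf; linarith
    rcases lt_trichotomy (cj.order - ci.order) 0 with h | h | h
    · have hle : cj.order - ci.order ≤ -1 := by omega
      nlinarith
    · rw [h, mul_zero, sub_eq_zero] at h1
      exact hij (Fin.ext (by exact_mod_cast h1))
    · have hle : 1 ≤ cj.order - ci.order := by omega
      nlinarith
  classical
  ext z
  simp only [Set.mem_setOf_eq, SetLike.mem_coe]
  constructor
  · -- o_L ⊆ o_K[t]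
    intro hz
    rcases eq_or_ne z 0 with rfl | hz0
    · exact Subalgebra.zero_mem _
    have hwz : 0 ≤ w z := hz.resolve_left hz0
    -- α is integral over K
    have haev : Polynomial.aeval α
        (Polynomial.X ^ p - (Polynomial.X + Polynomial.C a)) = 0 := by
      have h1 := map_sub (Polynomial.aeval α)
        ((Polynomial.X : Polynomial (LaurentSeries k)) ^ p) (Polynomial.X + Polynomial.C a)
      have h2 := map_add (Polynomial.aeval α)
        (Polynomial.X : Polynomial (LaurentSeries k)) (Polynomial.C a)
      have h3 := map_pow (Polynomial.aeval α)
        (Polynomial.X : Polynomial (LaurentSeries k)) p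
      rw [h1, h2, h3, Polynomial.aeval_X, Polynomial.aeval_C, sub_add_eq_sub_sub, hα, sub_self]
    have hmono : (Polynomial.X ^ p - (Polynomial.X + Polynomial.C a) :
        Polynomial (LaurentSeries k)).Monic := by
      apply Polynomial.monic_X_pow_sub
      rw [Polynomial.degree_X_add_C]
      exact_mod_cast (by omega : 1 < p)
    have hint : IsIntegral (LaurentSeries k) α :=
      ⟨Polynomial.X ^ p - (Polynomial.X + Polynomial.C a), hmono, haev⟩
    haveI := IntermediateField.adjoin.finiteDimensional hint
    have hdegF : (Polynomial.X ^ p - (Polynomial.X + Polynomial.C a) :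
        Polynomial (LaurentSeries k)).natDegree = p := by
      have h1 : (Polynomial.X + Polynomial.C a : Polynomial (LaurentSeries k)).degree
          < (Polynomial.X ^ p : Polynomial (LaurentSeries k)).degree := by
        rw [Polynomial.degree_X_add_C, Polynomial.degree_X_pow]
        exact_mod_cast (by omega : 1 < p)
      have h2 := Polynomial.degree_sub_eq_left_of_degree_lt h1
      exact Polynomial.natDegree_eq_of_degree_eq_some
        (by rw [h2, Polynomial.degree_X_pow])
    have hfr_le : Module.finrank (LaurentSeries k) ((LaurentSeries k)⟮α⟯) ≤ p := by
      rw [IntermediateField.adjoin.finrank hint]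
      have hd := minpoly.degree_le_of_ne_zero (LaurentSeries k) α hmono.ne_zero haev
      have := Polynomial.natDegree_le_natDegree hd
      omega
    have li : LinearIndependent (LaurentSeries k) (fun i : Fin p => t ^ (i : ℕ)) := by
      rw [Fintype.linearIndependent_iff]
      intro g hg
      by_contra hcon
      push_neg at hcon
      obtain ⟨i1, hi1⟩ := hcon
      set s : Finset (Fin p) := Finset.univ.filter (fun i => g i ≠ 0) with hs
      have hsum : ∑ i ∈ s, g i • t ^ (i : ℕ) = ∑ i, g i • t ^ (i : ℕ) :=
        Finset.sum_filter_of_ne (fun i _ hne => fun h0 => hne (by rw [h0, zero_smul]))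
      have h0' : ∀ i ∈ s, g i • t ^ (i : ℕ) ≠ 0 := fun i hi =>
        smul_ne_zero (Finset.mem_filter.mp hi).2 (pow_ne_zero _ ht0)
      have hd' : ∀ i ∈ s, ∀ j ∈ s, i ≠ j →
          w (g i • t ^ (i : ℕ)) ≠ w (g j • t ^ (j : ℕ)) := fun i hi j hj hij =>
        hdist i j hij (g i) (g j) (Finset.mem_filter.mp hi).2 (Finset.mem_filter.mp hj).2
      have hne := (aux_w_sum hw_mul hw_add s _ h0' hd'
        ⟨i1, Finset.mem_filter.mpr ⟨Finset.mem_univ _, hi1⟩⟩).1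
      rw [hsum, hg] at hne
      exact hne rfl
    have hfr_ge : p ≤ Module.finrank (LaurentSeries k) ((LaurentSeries k)⟮α⟯) := by
      simpa using li.fintype_card_le_finrank
    haveI : Nonempty (Fin p) := ⟨⟨0, by omega⟩⟩
    set b := basisOfLinearIndependentOfCardEqFinrank li
      (by rw [Fintype.card_fin]; omega) with hb
    have hbcoe : ∀ i : Fin p, b i = t ^ (i : ℕ) := fun i => by
      rw [hb, coe_basisOfLinearIndependentOfCardEqFinrank]
    have hrepr : ∑ i, b.repr z i • t ^ (i : ℕ) = z := by
      conv_rhs => rw [← b.sum_repr z]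
      exact Finset.sum_congr rfl (fun i _ => by rw [hbcoe i])
    set c : Fin p → LaurentSeries k := fun i => b.repr z i with hc
    set s : Finset (Fin p) := Finset.univ.filter (fun i => c i ≠ 0) with hs
    have hzsum : ∑ i ∈ s, c i • t ^ (i : ℕ) = z := by
      rw [← hrepr]
      apply Finset.sum_subset (Finset.filter_subset _ _)
      intro j _ hj
      have hcj : c j = 0 := by
        by_contra hcj
        exact hj (Finset.mem_filter.mpr ⟨Finset.mem_univ _, hcj⟩)
      rw [hcj, zero_smul]
    have hsne : s.Nonempty := by
      by_contra hemp
      rw [Finset.not_nonempty_iff_eq_empty] at hemp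
      exact hz0 (by rw [← hzsum, hemp, Finset.sum_empty])
    have h0' : ∀ i ∈ s, c i • t ^ (i : ℕ) ≠ 0 := fun i hi =>
      smul_ne_zero (Finset.mem_filter.mp hi).2 (pow_ne_zero _ ht0)
    have hd' : ∀ i ∈ s, ∀ j ∈ s, i ≠ j →
        w (c i • t ^ (i : ℕ)) ≠ w (c j • t ^ (j : ℕ)) := fun i hi j hj hij =>
      hdist i j hij (c i) (c j) (Finset.mem_filter.mp hi).2 (Finset.mem_filter.mp hj).2
    obtain ⟨i0, hi0, hw0, hmin⟩ := (aux_w_sum hw_mul hw_add s _ h0' hd' hsne).2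
    rw [← hzsum]
    apply Subalgebra.sum_mem
    intro i hi
    have hci : c i ≠ 0 := (Finset.mem_filter.mp hi).2
    have hterm : 0 ≤ w (c i • t ^ (i : ℕ)) := by
      have h1 : 0 ≤ w (∑ j ∈ s, c j • t ^ (j : ℕ)) := by rw [hzsum]; exact hwz
      rw [hw0] at h1
      exact le_trans h1 (hmin i hi)
    have hordnn : 0 ≤ (c i).order := by
      rw [hwtpow (c i) hci] at hterm
      have hibound : ((i : ℕ) : ℤ) < p := by exact_mod_cast i.2
      have hp0 : (0 : ℤ) < p := by positivity
      by_contra hneg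
      push_neg at hneg
      have : (c i).order ≤ -1 := by omega
      nlinarith
    obtain ⟨g, hg⟩ := aux_mem_range (c i) hordnn
    have hrewrite : c i • t ^ (i : ℕ)
        = algebraMap (PowerSeries k) ((LaurentSeries k)⟮α⟯) g * t ^ (i : ℕ) := by
      rw [Algebra.smul_def, halgPS, hg]
    rw [hrewrite]
    exact mul_mem (Subalgebra.algebraMap_mem _ g)
      (pow_mem (Algebra.self_mem_adjoin_singleton _ t) _)
  · -- o_K[t] ⊆ o_L
    intro hz
    induction hz using Algebra.adjoin_induction with
    | mem u hu =>
      right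
      rw [Set.mem_singleton_iff.mp hu, hwt]
      omega
    | algebraMap r =>
      rcases eq_or_ne r 0 with rfl | hr
      · left; rw [map_zero]
      · right
        have hrne : HahnSeries.ofPowerSeries ℤ k r ≠ 0 := fun h =>
          hr (HahnSeries.ofPowerSeries_injective (by rw [h, map_zero]))
        rw [halgPS, hw_ext _ hrne]
        exact mul_nonneg (Int.natCast_nonneg p) (aux_order_nonneg r hr)
    | add u v hu hv ihu ihv =>
      rcases eq_or_ne u 0 with rfl | hu0
      · rw [zero_add]; exact ihv
      rcases eq_or_ne v 0 with rfl | hv0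
      · rw [add_zero]; exact ihu
      rcases eq_or_ne (u + v) 0 with huv | huv
      · left; exact huv
      · right
        have hwu : 0 ≤ w u := ihu.resolve_left hu0
        have hwv : 0 ≤ w v := ihv.resolve_left hv0
        exact le_trans (le_min hwu hwv) (hw_add u v hu0 hv0 huv)
    | mul u v hu hv ihu ihv =>
      rcases eq_or_ne u 0 with rfl | hu0
      · left; rw [zero_mul]
      rcases eq_or_ne v 0 with rfl | hv0
      · left; rw [mul_zero]
      right
      rw [hw_mul u v hu0 hv0]
      exact add_nonneg (ihu.resolve_left hu0) (ihv.resolve_left hv0)
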